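/- Let b be uniformly distributed on the closed ball B_p(0,r) ⊂ ℂ^p of radius r > 0. Then for every u ∈ ℂ^p with u ≠ 0, every v ∈ ℂ, and every δ > 0: P[ |b* u + v| < δ ] ≤ (π V_{p−1}(r) / V_p(r)) · δ² / ‖u‖₂², where V_k(r) is the volume of the radius-r ball in ℂ^k (real dimension 2k). -/

import Mathlib

open scoped BigOperators Matrix

noncomputable def vnorm2 {m : ℕ} (x : Fin m → ℂ) : ℝ :=
  Real.sqrt (∑ i, ‖x i‖ ^ 2)

noncomputable def vnorm1 {m : ℕ} (x : Fin m → ℂ) : ℝ :=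
  ∑ i, ‖x i‖

noncomputable def opnorm2 {m n : ℕ} (A : Matrix (Fin m) (Fin n) ℂ) : ℝ :=
  sSup {c | ∃ x : Fin n → ℂ, vnorm2 x = 1 ∧ c = vnorm2 (A.mulVec x)}

noncomputable def opnorm1 {m n : ℕ} (A : Matrix (Fin m) (Fin n) ℂ) : ℝ :=
  sSup {c | ∃ x : Fin n → ℂ, vnorm1 x = 1 ∧ c = vnorm1 (A.mulVec x)}

noncomputable def frobNorm {m n : ℕ} (A : Matrix (Fin m) (Fin n) ℂ) : ℝ :=
  Real.sqrt (∑ i, ∑ j, ‖A i j‖ ^ 2)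

def Dmat {m : ℕ} (P : Finset (Fin m)) : Matrix (Fin m) (Fin m) ℂ :=
  Matrix.diagonal (fun i => if i ∈ P then 1 else 0)

noncomputable def dft (m : ℕ) : Matrix (Fin m) (Fin m) ℂ :=
  fun k l => (1 / Real.sqrt m : ℝ) *
    Complex.exp (-2 * Real.pi * Complex.I * (k.1 + 1) * (l.1 + 1) / m)

open MeasureTheory ProbabilityTheory

def ballC (p : ℕ) (r : ℝ) : Set (Fin p → ℂ) := {b | vnorm2 b ≤ r}

noncomputable def Vball (k : ℕ) (r : ℝ) : ℝ := (volume (ballC k r)).toReal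

/-! ### Auxiliary machinery -/

section Aux

/-- Currying measurable equivalence. -/
noncomputable def curryME (k : ℕ) : (Fin k → Fin 2 → ℝ) ≃ᵐ (Fin k × Fin 2 → ℝ) where
  toEquiv := (Equiv.curry (Fin k) (Fin 2) ℝ).symm
  measurable_toFun := measurable_pi_iff.mpr fun p =>
    (measurable_pi_apply p.2).comp (measurable_pi_apply p.1)
  measurable_invFun := measurable_pi_iff.mpr fun j => measurable_pi_iff.mpr fun kk =>
    measurable_pi_apply (j, kk)

theorem curryME_mp (k : ℕ) : MeasurePreserving (curryME k) volume volume := by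
  refine ⟨(curryME k).measurable, ?_⟩
  refine (Measure.pi_eq fun s hs => ?_).symm
  rw [MeasurableEquiv.map_apply]
  have h : (curryME k) ⁻¹' (Set.pi Set.univ s) =
      Set.pi Set.univ (fun j => Set.pi Set.univ fun kk => s (j, kk)) := by
    ext f
    simp [curryME, Set.mem_pi, Prod.forall, Function.uncurry]
  rw [h, volume_pi_pi]
  have h2 : ∀ j, (volume : Measure (Fin 2 → ℝ)) (Set.pi Set.univ fun kk => s (j, kk)) =
      ∏ kk, volume (s (j, kk)) := fun j => volume_pi_pi _
  simp_rw [h2]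
  rw [Fintype.prod_prod_type]

/-- The identification of `ℂ^k` with the Euclidean space `ℝ^(k × 2)`. -/
noncomputable def ThME (k : ℕ) : (Fin k → ℂ) ≃ᵐ EuclideanSpace ℝ (Fin k × Fin 2) :=
  (MeasurableEquiv.piCongrRight fun _ => Complex.measurableEquivPi).trans
    ((curryME k).trans (MeasurableEquiv.toLp 2 (Fin k × Fin 2 → ℝ)))

theorem ThME_mp (k : ℕ) : MeasurePreserving (ThME k) volume volume := by
  have h1 : MeasurePreserving (⇑(MeasurableEquiv.piCongrRight
      fun _ : Fin k => Complex.measurableEquivPi)) volume volume :=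
    volume_preserving_pi fun _ => Complex.volume_preserving_equiv_pi
  have h2 : MeasurePreserving
      (⇑(MeasurableEquiv.toLp 2 (Fin k × Fin 2 → ℝ))) volume volume :=
    (EuclideanSpace.volume_preserving_symm_measurableEquiv_toLp (Fin k × Fin 2)).symm
      _
  exact h2.comp ((curryME_mp k).comp h1)

/-- The real-linear isometry `ℝ^(k×2) ≃ ℂ^k` (with `ℓ²` norms). -/
noncomputable def Lk (k : ℕ) :
    EuclideanSpace ℝ (Fin k × Fin 2) ≃ₗᵢ[ℝ] EuclideanSpace ℂ (Fin k) where
  toLinearEquiv :=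
  { toFun := fun x => (WithLp.equiv 2 (Fin k → ℂ)).symm fun j =>
      (x (j, 0) : ℂ) + (x (j, 1) : ℂ) * Complex.I
    invFun := fun c => (WithLp.equiv 2 (Fin k × Fin 2 → ℝ)).symm fun p =>
      ![(c p.1).re, (c p.1).im] p.2
    map_add' := by
      intro x y
      ext j
      simp [PiLp.toLp_apply]
      ring
    map_smul' := by
      intro t x
      ext j
      simp [PiLp.toLp_apply, Complex.ofReal_mul]
      ring
    left_inv := by
      intro x
      ext ⟨j, kk⟩
      fin_cases kk <;> simp [PiLp.toLp_apply]
    right_inv := by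
      intro c
      ext j
      simp [PiLp.toLp_apply, Complex.re_add_im] }
  norm_map' := by
    intro x
    rw [EuclideanSpace.norm_eq, EuclideanSpace.norm_eq]
    congr 1
    rw [Fintype.sum_prod_type]
    refine Finset.sum_congr rfl fun j _ => ?_
    rw [Fin.sum_univ_two]
    simp only [LinearEquiv.coe_mk, LinearMap.coe_mk, AddHom.coe_mk, WithLp.equiv_symm_apply, PiLp.toLp_apply]
    rw [Complex.sq_norm, Complex.normSq_add_mul_I,
      Real.norm_eq_abs, Real.norm_eq_abs, sq_abs, sq_abs]

theorem ThME_eq (k : ℕ) (c : Fin k → ℂ) :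
    ThME k c = (Lk k).symm ((WithLp.equiv 2 (Fin k → ℂ)).symm c) := rfl

theorem ThME_symm_eq (k : ℕ) (y : EuclideanSpace ℝ (Fin k × Fin 2)) :
    (ThME k).symm y = WithLp.equiv 2 (Fin k → ℂ) (Lk k y) := by
  have h : ThME k ((WithLp.equiv 2 (Fin k → ℂ)) (Lk k y)) = y := by
    rw [ThME_eq]; simp
  conv_lhs => rw [← h, MeasurableEquiv.symm_apply_apply]

theorem vnorm2_eq_norm {k : ℕ} (b : Fin k → ℂ) :
    vnorm2 b = ‖(WithLp.equiv 2 (Fin k → ℂ)).symm b‖ := by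
  have h : ∀ i, ‖b i‖ ^ 2 = ‖((WithLp.equiv 2 (Fin k → ℂ)).symm b) i‖ ^ 2 :=
    fun i => by rw [WithLp.equiv_symm_apply, PiLp.toLp_apply]
  rw [vnorm2, EuclideanSpace.norm_eq]
  simp_rw [h]

theorem norm_ThME {k : ℕ} (b : Fin k → ℂ) : ‖ThME k b‖ = vnorm2 b := by
  rw [ThME_eq, LinearIsometryEquiv.norm_map, vnorm2_eq_norm]

/-- Any complex-linear isometry of `ℂ^k` is volume preserving on the plain pi type. -/
theorem mp_isometry {k : ℕ} (f : EuclideanSpace ℂ (Fin k) ≃ₗᵢ[ℂ] EuclideanSpace ℂ (Fin k)) :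
    MeasurePreserving (fun b : Fin k → ℂ =>
      WithLp.equiv 2 (Fin k → ℂ) (f ((WithLp.equiv 2 (Fin k → ℂ)).symm b))) volume volume := by
  let fR : EuclideanSpace ℂ (Fin k) ≃ₗᵢ[ℝ] EuclideanSpace ℂ (Fin k) :=
    ⟨f.toLinearEquiv.restrictScalars ℝ, f.norm_map⟩
  let g := ((Lk k).trans fR).trans (Lk k).symm
  have hg : MeasurePreserving g volume volume := g.measurePreserving
  have key : (fun b : Fin k → ℂ =>
      WithLp.equiv 2 (Fin k → ℂ) (f ((WithLp.equiv 2 (Fin k → ℂ)).symm b)))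
      = ⇑(ThME k).symm ∘ ⇑g ∘ ⇑(ThME k) := by
    funext b
    simp only [Function.comp_apply]
    rw [ThME_eq]
    have hgapp : g ((Lk k).symm ((WithLp.equiv 2 (Fin k → ℂ)).symm b))
        = (Lk k).symm (f ((WithLp.equiv 2 (Fin k → ℂ)).symm b)) := by
      simp only [g, LinearIsometryEquiv.trans_apply, LinearIsometryEquiv.apply_symm_apply]
      rfl
    rw [hgapp, ThME_symm_eq, LinearIsometryEquiv.apply_symm_apply]
  rw [key]
  exact ((ThME_mp k).symm (ThME k)).comp (hg.comp (ThME_mp k))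

theorem mem_ballC_iff {k : ℕ} {r : ℝ} (hr : 0 ≤ r) (w : Fin k → ℂ) :
    w ∈ ballC k r ↔ ∑ i, ‖w i‖ ^ 2 ≤ r ^ 2 := by
  rw [ballC, Set.mem_setOf_eq, vnorm2]
  rw [show r = Real.sqrt (r ^ 2) by rw [Real.sqrt_sq hr]]
  rw [Real.sqrt_le_sqrt_iff (by positivity), Real.sqrt_sq hr]

theorem measurableSet_ballC (k : ℕ) (r : ℝ) : MeasurableSet (ballC k r) := by
  have : Continuous fun w : Fin k → ℂ => vnorm2 w := by
    unfold vnorm2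
    exact (continuous_finset_sum _ fun i _ =>
      ((continuous_norm.comp (continuous_apply i)).pow 2)).sqrt
  exact (isClosed_Iic.preimage this).measurableSet

theorem volume_ballC_eq (k : ℕ) (r : ℝ) :
    volume (ballC k r) =
      volume (Metric.closedBall (0 : EuclideanSpace ℝ (Fin k × Fin 2)) r) := by
  have h : ballC k r = ThME k ⁻¹' Metric.closedBall 0 r := by
    ext b
    simp only [Set.mem_preimage, Metric.mem_closedBall, dist_zero_right, norm_ThME]
    rfl
  rw [h, (ThME_mp k).measure_preimage measurableSet_closedBall.nullMeasurableSet]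

theorem volume_ballC_pos (k : ℕ) {r : ℝ} (hr : 0 < r) : 0 < volume (ballC k r) := by
  rw [volume_ballC_eq]
  exact lt_of_lt_of_le (Metric.measure_ball_pos volume 0 hr)
    (measure_mono Metric.ball_subset_closedBall)

theorem volume_ballC_ne_top (k : ℕ) (r : ℝ) : volume (ballC k r) ≠ ⊤ := by
  rw [volume_ballC_eq]
  exact measure_closedBall_lt_top.ne

theorem mp_eval_default {ι : Type*} [Fintype ι] [Unique ι] :
    MeasurePreserving (fun y : ι → ℂ => y default) volume volume := by
  have hm : Measurable (fun y : ι → ℂ => y default) := measurable_pi_apply _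
  constructor
  · exact hm
  · refine Measure.ext fun s hs => ?_
    rw [Measure.map_apply hm hs]
    have h : (fun y : ι → ℂ => y default) ⁻¹' s = Set.pi Set.univ (fun _ => s) := by
      ext y
      simp [Set.mem_pi, Unique.forall_iff]
    rw [h, volume_pi_pi, Finset.univ_unique, Finset.prod_singleton]

end Aux

theorem stmt18 {p : ℕ} (r : ℝ) (hr : 0 < r)
    (u : Fin p → ℂ) (hu : u ≠ 0) (v : ℂ) (δ : ℝ) (hδ : 0 < δ) :
    (volume[|ballC p r]) {b : Fin p → ℂ |
        ‖(∑ i, (starRingEnd ℂ) (b i) * u i) + v‖ < δ}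
      ≤ ENNReal.ofReal (Real.pi * Vball (p - 1) r / Vball p r * δ ^ 2 / vnorm2 u ^ 2) := by
  have hp0 : p ≠ 0 := by
    rintro rfl
    exact hu (funext fun i => i.elim0)
  obtain ⟨q, rfl⟩ : ∃ q, p = q + 1 :=
    ⟨p - 1, (Nat.succ_pred_eq_of_pos (Nat.pos_of_ne_zero hp0)).symm⟩
  have hq1 : q + 1 - 1 = q := rfl
  -- basic data
  have hu' : (WithLp.equiv 2 (Fin (q+1) → ℂ)).symm u ≠ 0 := by
    intro h
    apply hu
    have h2 := congrArg (WithLp.equiv 2 (Fin (q+1) → ℂ)) h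
    simpa using h2
  set u' : EuclideanSpace ℂ (Fin (q+1)) := (WithLp.equiv 2 (Fin (q+1) → ℂ)).symm u with hu'def
  have hn : 0 < ‖u'‖ := norm_pos_iff.mpr hu'
  set n : ℝ := ‖u'‖ with hndef
  have hnvn : vnorm2 u = n := vnorm2_eq_norm u
  set e : EuclideanSpace ℂ (Fin (q+1)) := ((n : ℂ)⁻¹) • u' with hedef
  have hncne : (n : ℂ) ≠ 0 := by exact_mod_cast hn.ne'
  have he : ‖e‖ = 1 := by
    rw [hedef, norm_smul, norm_inv, Complex.norm_real, Real.norm_eq_abs, abs_of_pos hn]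
    rw [← hndef, inv_mul_cancel₀ hn.ne']
  obtain ⟨B, hB⟩ : ∃ B : OrthonormalBasis (Fin (q+1)) ℂ (EuclideanSpace ℂ (Fin (q+1))),
      ∀ i ∈ ({0} : Set (Fin (q+1))), B i = (fun _ => e) i := by
    apply Orthonormal.exists_orthonormalBasis_extension_of_card_eq
    · simp
    · constructor
      · rintro ⟨i, hi⟩; exact he
      · rintro ⟨i, hi⟩ ⟨j, hj⟩ hij
        simp only [Set.mem_singleton_iff] at hi hj
        exact absurd (Subtype.ext (hi.trans hj.symm)) hij
  have hB0 : B 0 = e := hB 0 rfl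
  set T := B.repr with hTdef
  -- the inner-product identity
  have key : ∀ b : Fin (q+1) → ℂ,
      (∑ i, (starRingEnd ℂ) (b i) * u i) =
        (n : ℂ) * (starRingEnd ℂ) (T ((WithLp.equiv 2 (Fin (q+1) → ℂ)).symm b) 0) := by
    intro b
    have h1 : (∑ i, (starRingEnd ℂ) (b i) * u i)
        = inner ℂ ((WithLp.equiv 2 (Fin (q+1) → ℂ)).symm b) u' := by
      rw [PiLp.inner_apply]
      exact Finset.sum_congr rfl fun i _ => mul_comm _ _
    have hu'e : u' = (n : ℂ) • e := by
      rw [hedef, smul_smul, mul_inv_cancel₀ hncne, one_smul]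
    rw [h1, hu'e, inner_smul_right]
    congr 1
    rw [hTdef, OrthonormalBasis.repr_apply_apply, hB0]
    exact (inner_conj_symm _ _).symm
  -- the measure-preserving unitary map
  set Φ : (Fin (q+1) → ℂ) → (Fin (q+1) → ℂ) := fun b =>
    WithLp.equiv 2 (Fin (q+1) → ℂ) (T ((WithLp.equiv 2 (Fin (q+1) → ℂ)).symm b)) with hΦdef
  have hΦ : MeasurePreserving Φ volume volume := mp_isometry T
  have hΦnorm : ∀ b, vnorm2 (Φ b) = vnorm2 b := by
    intro b
    rw [vnorm2_eq_norm, vnorm2_eq_norm b, hΦdef]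
    simp only [Equiv.symm_apply_apply]
    exact T.norm_map _
  -- rewriting the event
  set S' : Set (Fin (q+1) → ℂ) :=
    {c | ‖(n : ℂ) * (starRingEnd ℂ) (c 0) + v‖ < δ} with hS'def
  have hS'meas : MeasurableSet S' := by
    have hc : Continuous fun c : Fin (q+1) → ℂ =>
        ‖(n : ℂ) * (starRingEnd ℂ) (c 0) + v‖ :=
      continuous_norm.comp
        (((continuous_const.mul (Complex.continuous_conj.comp (continuous_apply 0)))).add
          continuous_const)
    exact (isOpen_Iio.preimage hc).measurableSet
  have hinter : ballC (q+1) r ∩ {b : Fin (q+1) → ℂ |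
        ‖(∑ i, (starRingEnd ℂ) (b i) * u i) + v‖ < δ}
      = Φ ⁻¹' (ballC (q+1) r ∩ S') := by
    ext b
    simp only [Set.mem_inter_iff, Set.mem_preimage, Set.mem_setOf_eq, hS'def, ballC]
    rw [key b]
    have h1 : vnorm2 b ≤ r ↔ vnorm2 (Φ b) ≤ r := by rw [hΦnorm]
    have h2 : Φ b 0 = T ((WithLp.equiv 2 (Fin (q+1) → ℂ)).symm b) 0 := rfl
    rw [h2, h1]
  -- split off coordinate 0
  set S1 : Set ({i : Fin (q+1) // i.val = 0} → ℂ) :=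
    {y | ‖(n : ℂ) * (starRingEnd ℂ) (y ⟨0, Fin.val_zero (q+1)⟩) + v‖ < δ} with hS1def
  set S2 : Set ({i : Fin (q+1) // ¬ i.val = 0} → ℂ) :=
    {z | ∑ i, ‖z i‖ ^ 2 ≤ r ^ 2} with hS2def
  have hS1meas : MeasurableSet S1 := by
    have hc : Continuous fun y : {i : Fin (q+1) // i.val = 0} → ℂ =>
        ‖(n : ℂ) * (starRingEnd ℂ) (y ⟨0, Fin.val_zero (q+1)⟩) + v‖ :=
      continuous_norm.comp
        (((continuous_const.mul (Complex.continuous_conj.comp (continuous_apply _)))).add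
          continuous_const)
    exact (isOpen_Iio.preimage hc).measurableSet
  have hS2meas : MeasurableSet S2 := by
    have hc : Continuous fun z : {i : Fin (q+1) // ¬ i.val = 0} → ℂ =>
        ∑ i, ‖z i‖ ^ 2 :=
      continuous_finset_sum _ fun i _ =>
        ((continuous_norm.comp (continuous_apply i)).pow 2)
    exact (isClosed_Iic.preimage hc).measurableSet
  set ρ := MeasurableEquiv.piEquivPiSubtypeProd (fun _ : Fin (q+1) => ℂ) (fun i => i.val = 0)
    with hρdef
  have hρmp : MeasurePreserving ρ volume volume :=
    volume_preserving_piEquivPiSubtypeProd (fun _ : Fin (q+1) => ℂ) (fun i => i.val = 0)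
  have hsubset : ballC (q+1) r ∩ S' ⊆ ρ ⁻¹' (S1 ×ˢ S2) := by
    intro c hc
    obtain ⟨hc1, hc2⟩ := hc
    rw [mem_ballC_iff hr.le] at hc1
    refine Set.mem_preimage.mpr (Set.mem_prod.mpr ⟨?_, ?_⟩)
    · exact hc2
    · show ∑ i : {i : Fin (q+1) // ¬ i.val = 0}, ‖c i.1‖ ^ 2 ≤ r ^ 2
      refine le_trans ?_ hc1
      have h3 : ∑ i : {i : Fin (q+1) // ¬ i.val = 0}, ‖c i.1‖ ^ 2
          = ∑ i ∈ Finset.univ.filter (fun i : Fin (q+1) => ¬ i.val = 0),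
              ‖c i‖ ^ 2 :=
        (Finset.sum_subtype (Finset.univ.filter (fun i : Fin (q+1) => ¬ i.val = 0))
          (fun x => by simp) (fun i => ‖c i‖ ^ 2)).symm
      rw [h3]
      exact Finset.sum_le_sum_of_subset_of_nonneg (Finset.filter_subset _ _)
        (fun i _ _ => by positivity)
  -- volume of the disc factor
  letI : Unique {i : Fin (q+1) // i.val = 0} :=
    ⟨⟨⟨0, Fin.val_zero (q+1)⟩⟩, fun a => Subtype.ext (Fin.ext (by simpa using a.2))⟩
  have hfu : MeasurePreserving (fun y : {i : Fin (q+1) // i.val = 0} → ℂ => y default)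
      volume volume := mp_eval_default
  have hD : {z : ℂ | ‖(n : ℂ) * (starRingEnd ℂ) z + v‖ < δ}
      = Metric.ball (-((starRingEnd ℂ) v) / (n : ℂ)) (δ / n) := by
    ext z
    simp only [Set.mem_setOf_eq, Metric.mem_ball, Complex.dist_eq]
    have habs : ‖(n : ℂ) * (starRingEnd ℂ) z + v‖
        = n * ‖z - -((starRingEnd ℂ) v) / (n : ℂ)‖ := by
      have h1 : (n : ℂ) * (starRingEnd ℂ) z + v
          = (starRingEnd ℂ) ((n : ℂ) * z + (starRingEnd ℂ) v) := by
        rw [map_add, map_mul, Complex.conj_conj, Complex.conj_ofReal]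
      have h2 : (n : ℂ) * z + (starRingEnd ℂ) v
          = (n : ℂ) * (z - -((starRingEnd ℂ) v) / (n : ℂ)) := by
        field_simp
        ring
      rw [h1, Complex.norm_conj, h2, norm_mul, Complex.norm_real, Real.norm_eq_abs, abs_of_pos hn]
    rw [habs, mul_comm]
    exact (lt_div_iff₀ hn).symm
  have hDmeas : MeasureTheory.NullMeasurableSet
      {z : ℂ | ‖(n : ℂ) * (starRingEnd ℂ) z + v‖ < δ} volume := by
    rw [hD]; exact measurableSet_ball.nullMeasurableSet
  have hS1vol : volume S1 = ENNReal.ofReal (δ / n) ^ 2 * NNReal.pi := by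
    have h1 : S1 = (fun y : {i : Fin (q+1) // i.val = 0} → ℂ => y default) ⁻¹'
        {z : ℂ | ‖(n : ℂ) * (starRingEnd ℂ) z + v‖ < δ} := rfl
    rw [h1, hfu.measure_preimage hDmeas, hD, Complex.volume_ball]
  -- volume of the ball factor
  have hS2vol : volume S2 = volume (ballC q r) := by
    set τ : Fin q ≃ {x : Fin (q+1) // ¬ x.val = 0} :=
      (finSuccAboveEquiv 0).trans (Equiv.subtypeEquivRight (fun x => by
        exact not_congr Fin.ext_iff)) with hτdef
    have hmp2 : MeasurePreserving (MeasurableEquiv.piCongrLeft (fun _ => ℂ) τ)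
        volume volume := volume_measurePreserving_piCongrLeft (fun _ => ℂ) τ
    have hpre : (MeasurableEquiv.piCongrLeft (fun _ => ℂ) τ) ⁻¹' S2 = ballC q r := by
      ext w
      rw [Set.mem_preimage, hS2def, Set.mem_setOf_eq, mem_ballC_iff hr.le]
      have hsum : ∑ i : {x : Fin (q+1) // ¬ x.val = 0},
          ‖(MeasurableEquiv.piCongrLeft (fun _ => ℂ) τ) w i‖ ^ 2
          = ∑ j, ‖w j‖ ^ 2 := by
        rw [← Equiv.sum_comp τ (fun i =>
          ‖(MeasurableEquiv.piCongrLeft (fun _ => ℂ) τ) w i‖ ^ 2)]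
        refine Finset.sum_congr rfl fun j _ => ?_
        rw [show ((MeasurableEquiv.piCongrLeft (fun _ => ℂ) τ) w (τ j)) = w j from
          Equiv.piCongrLeft_apply_apply (fun _ => ℂ) τ w j]
      rw [hsum]
    rw [← hpre, hmp2.measure_preimage hS2meas.nullMeasurableSet]
  -- put it together
  rw [cond_apply (measurableSet_ballC (q+1) r)]
  have hAS : volume (ballC (q+1) r ∩ {b : Fin (q+1) → ℂ |
        ‖(∑ i, (starRingEnd ℂ) (b i) * u i) + v‖ < δ})
      = volume (ballC (q+1) r ∩ S') := by
    rw [hinter, hΦ.measure_preimage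
      ((measurableSet_ballC (q+1) r).inter hS'meas).nullMeasurableSet]
  have hbound : volume (ballC (q+1) r ∩ S')
      ≤ ENNReal.ofReal ((δ / n) ^ 2 * Real.pi * Vball q r) := by
    calc volume (ballC (q+1) r ∩ S') ≤ volume (ρ ⁻¹' (S1 ×ˢ S2)) :=
          measure_mono hsubset
      _ = volume (S1 ×ˢ S2) :=
          hρmp.measure_preimage (hS1meas.prod hS2meas).nullMeasurableSet
      _ = volume S1 * volume S2 := by
          rw [MeasureTheory.Measure.volume_eq_prod, MeasureTheory.Measure.prod_prod]
      _ = (ENNReal.ofReal (δ / n) ^ 2 * NNReal.pi) * volume (ballC q r) := by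
          rw [hS1vol, hS2vol]
      _ = ENNReal.ofReal ((δ / n) ^ 2 * Real.pi * Vball q r) := by
          rw [← ENNReal.ofReal_pow (by positivity)]
          rw [show ((NNReal.pi : ENNReal)) = ENNReal.ofReal Real.pi by
            rw [← NNReal.coe_real_pi, ENNReal.ofReal_coe_nnreal]]
          rw [show (volume (ballC q r)) = ENNReal.ofReal (Vball q r) from
            (ENNReal.ofReal_toReal (volume_ballC_ne_top q r)).symm]
          rw [← ENNReal.ofReal_mul (by positivity), ← ENNReal.ofReal_mul (by positivity)]
  rw [hAS]
  have hVA : volume (ballC (q+1) r) = ENNReal.ofReal (Vball (q+1) r) :=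
    (ENNReal.ofReal_toReal (volume_ballC_ne_top (q+1) r)).symm
  have hVp_pos : 0 < Vball (q+1) r :=
    ENNReal.toReal_pos (volume_ballC_pos (q+1) hr).ne' (volume_ballC_ne_top (q+1) r)
  calc (volume (ballC (q+1) r))⁻¹ * volume (ballC (q+1) r ∩ S')
      ≤ (volume (ballC (q+1) r))⁻¹ * ENNReal.ofReal ((δ / n) ^ 2 * Real.pi * Vball q r) :=
        mul_le_mul_right hbound _
    _ = ENNReal.ofReal (((δ / n) ^ 2 * Real.pi * Vball q r) / Vball (q+1) r) := by
        rw [hVA, ENNReal.ofReal_div_of_pos hVp_pos, ENNReal.div_eq_inv_mul]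
    _ ≤ ENNReal.ofReal
        (Real.pi * Vball (q + 1 - 1) r / Vball (q+1) r * δ ^ 2 / vnorm2 u ^ 2) := by
        apply ENNReal.ofReal_le_ofReal
        apply le_of_eq
        rw [hq1, hnvn, div_pow]
        ring
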